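/- In an augmented merge tree under a minimal vertex perturbation where x passes its parent-direction neighbor y, every child z of y in T_f (i.e., (z,y) ∈ E(T_f), z ≠ x) becomes in T_{f'} either a child of y or a child of x: (z,x) ∈ E(T_{f'}) or (z,y) ∈ E(T_{f'}). -/

import Mathlib

/-- `u` and `w` lie in the same connected component of the vertex set `S`
(connectivity via edges of `G` staying inside `S`). -/
def connIn {V : Type*} (G : SimpleGraph V) (S : Set V) (u w : V) : Prop :=
  u ∈ S ∧ w ∈ S ∧ Relation.ReflTransGen (fun a b => a ∈ S ∧ b ∈ S ∧ G.Adj a b) u w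

/-- Edge `(y,x)` of the augmented merge (split) tree of the field `f`. -/
def mtEdge {V : Type*} (G : SimpleGraph V) (f : V → ℝ) (y x : V) : Prop :=
  (∀ w, connIn G {z | f x < f z} y w → f y ≤ f w) ∧
  ∃ y', connIn G {z | f x < f z} y y' ∧ G.Adj x y'

lemma connIn_mono {V : Type*} (G : SimpleGraph V) {S T : Set V} (hST : S ⊆ T)
    {u w : V} (h : connIn G S u w) : connIn G T u w := by
  obtain ⟨hu, hw, hpath⟩ := h
  exact ⟨hST hu, hST hw, Relation.ReflTransGen.mono (p := fun a b => a ∈ T ∧ b ∈ T ∧ G.Adj a b) (fun a b (hab : a ∈ S ∧ b ∈ S ∧ G.Adj a b) => ⟨hST hab.1, hST hab.2.1, hab.2.2⟩) u w hpath⟩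

lemma connIn_union_singleton {V : Type*} (G : SimpleGraph V) (S : Set V) (x z w : V)
    (hnadj : ¬ ∃ x', connIn G S z x' ∧ G.Adj x x')
    (hzS : z ∈ S)
    (h : connIn G (S ∪ {x}) z w) : connIn G S z w := by
  obtain ⟨-, hw, hpath⟩ := h
  clear hw
  induction hpath with
  | refl => exact ⟨hzS, hzS, Relation.ReflTransGen.refl⟩
  | tail hab hr ih =>
    obtain ⟨hb, hc, hadj⟩ := hr
    rcases hc with hc | hc
    · exact ⟨ih.1, hc, ih.2.2.tail ⟨ih.2.1, hc, hadj⟩⟩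
    · rw [Set.mem_singleton_iff] at hc
      subst hc
      exact absurd ⟨_, ih, hadj.symm⟩ hnadj

/-- under a minimal vertex perturbation where `x` passes its neighbor `y`
(`(y,x) ∈ E(T_f)`), every child `z ≠ x` of `y` in `T_f` becomes in `T_{f'}` either a
child of `y` or a child of `x`. -/
theorem stmt_8 {V : Type*} (G : SimpleGraph V) (f f' : V → ℝ)
    (hf : Function.Injective f) (hf' : Function.Injective f')
    (x y : V) (hxy : x ≠ y)
    (hothers : ∀ w, w ≠ x → f' w = f w)
    (h1 : f x < f y) (h2 : f y < f' x)
    (hadjrank : ∀ z, z ≠ x → z ≠ y → f z < f x ∨ f' x < f z)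
    (hedge : mtEdge G f y x) :
    ∀ z, z ≠ x → mtEdge G f z y → mtEdge G f' z x ∨ mtEdge G f' z y := by
  intro z hzx hz
  obtain ⟨hmin, y', hzy', hy'⟩ := hz
  set S : Set V := {u | f y < f u} with hSdef
  have hzS : z ∈ S := hzy'.1
  have hfy' : f' y = f y := hothers y (Ne.symm hxy)
  -- superlevel set of f' at level f' x equals S
  have hSeq : {u | f' x < f' u} = S := by
    ext w
    by_cases hwx : w = x
    · subst hwx
      simp only [Set.mem_setOf_eq, hSdef, lt_irrefl, false_iff, not_lt]
      exact h1.le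
    by_cases hwy : w = y
    · subst hwy
      simp only [Set.mem_setOf_eq, hSdef, hfy', lt_irrefl, iff_false, not_lt]
      exact h2.le
    · simp only [Set.mem_setOf_eq, hSdef, hothers w hwx]
      rcases hadjrank w hwx hwy with hlt | hgt
      · constructor
        · intro h; exact h2.trans h
        · intro h; exact absurd (h.trans (hlt.trans h1)) (lt_irrefl _)
      · exact ⟨fun _ => h2.trans hgt, fun _ => hgt⟩
  -- superlevel set of f' at level f' y equals S ∪ {x}
  have hSeq' : {u | f' y < f' u} = S ∪ {x} := by
    ext w
    by_cases hwx : w = x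
    · rw [hwx]
      constructor
      · intro _; exact Set.mem_union_right S rfl
      · intro _; show f' y < f' x; rw [hfy']; exact h2
    by_cases hwy : w = y
    · rw [hwy]
      constructor
      · intro h; exact absurd (show f' y < f' y from h) (lt_irrefl _)
      · rintro (h | h)
        · exact absurd (show f y < f y from h) (lt_irrefl _)
        · exact absurd (show y = x from h) hxy.symm
    · simp only [Set.mem_setOf_eq, hSdef, hfy', hothers w hwx, Set.mem_union,
        Set.mem_singleton_iff]
      exact ⟨fun h => Or.inl h, fun h => h.elim id fun hx => absurd hx hwx⟩
  have hxS : x ∉ S := by simp only [hSdef, Set.mem_setOf_eq, not_lt]; exact h1.le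
  have hfS : ∀ w ∈ S, f' w = f w := by
    intro w hw
    exact hothers w (fun hwx => hxS (hwx ▸ hw))
  by_cases hcase : ∃ x', connIn G S z x' ∧ G.Adj x x'
  · -- z becomes a child of x
    left
    constructor
    · intro w hw
      rw [hSeq] at hw
      rw [hfS z hzS, hfS w hw.2.1]
      exact hmin w hw
    · obtain ⟨x', hx', hadjx⟩ := hcase
      exact ⟨x', by rw [hSeq]; exact hx', hadjx⟩
  · -- z stays a child of y
    right
    constructor
    · intro w hw
      rw [hSeq'] at hw
      have hw' := connIn_union_singleton G S x z w hcase hzS hw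
      rw [hfS z hzS, hfS w hw'.2.1]
      exact hmin w hw'
    · refine ⟨y', ?_, hy'⟩
      rw [hSeq']
      exact connIn_mono G (Set.subset_union_left) hzy'
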